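/- For all real numbers a, b, exponents p > 1 and β ≥ 1, setting C(β,p) = (p/(β+p-1))^p, one has |a-b|^{p-2}(a-b)·((a⁺)^β - (b⁺)^β) ≥ C(β,p)·|(a⁺)^{(β+p-1)/p} - (b⁺)^{(β+p-1)/p}|^p, where a⁺ = max{a,0}. -/

import Mathlib

open Real Set

/-- Core calculus lemma: for `0 ≤ y ≤ x`,
`x^γ - y^γ ≤ γ * (x-y)^((p-1)/p) * (x^β-y^β)^(1/p)` with `γ = (β+p-1)/p`. -/
lemma aux_core (p β : ℝ) (hp : 1 < p) (hβ : 1 ≤ β) {y x : ℝ} (hy : 0 ≤ y) (hxy : y ≤ x) :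
    x ^ ((β + p - 1) / p) - y ^ ((β + p - 1) / p) ≤
      ((β + p - 1) / p) * ((x - y) ^ ((p - 1) / p) * (x ^ β - y ^ β) ^ (1 / p)) := by
  have hp0 : (0:ℝ) < p := lt_trans one_pos hp
  have hp1 : (0:ℝ) < p - 1 := by linarith
  set γ : ℝ := (β + p - 1) / p with hγdef
  have hγ1 : 1 ≤ γ := by rw [hγdef, le_div_iff₀ hp0]; linarith
  have hγ0 : 0 < γ := lt_of_lt_of_le one_pos hγ1
  set f : ℝ → ℝ := fun t =>
    γ * ((t - y) ^ ((p - 1) / p) * (t ^ β - y ^ β) ^ (1 / p)) - (t ^ γ - y ^ γ) with hfdef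
  have hβ0 : (0:ℝ) < β := lt_of_lt_of_le one_pos hβ
  -- continuity
  have hc : Continuous f := by
    have c1 : Continuous fun t : ℝ => (t - y) ^ ((p - 1) / p) :=
      (Real.continuous_rpow_const (by positivity)).comp (continuous_id.sub continuous_const)
    have c2 : Continuous fun t : ℝ => (t ^ β - y ^ β) ^ (1 / p) :=
      (Real.continuous_rpow_const (by positivity)).comp
        ((Real.continuous_rpow_const hβ0.le).sub continuous_const)
    have c3 : Continuous fun t : ℝ => t ^ γ := Real.continuous_rpow_const hγ0.le
    fun_prop
  -- the derivative at points x > y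
  have hderiv : ∀ t ∈ Ioi y, HasDerivAt f
      (γ * ((1 * ((p - 1) / p) * (t - y) ^ ((p - 1) / p - 1)) * (t ^ β - y ^ β) ^ (1 / p)
        + (t - y) ^ ((p - 1) / p) *
          ((β * t ^ (β - 1)) * (1 / p) * (t ^ β - y ^ β) ^ (1 / p - 1)))
        - γ * t ^ (γ - 1)) t := by
    intro t ht
    have ht' : y < t := ht
    have ht0 : 0 < t := lt_of_le_of_lt hy ht'
    have hu : 0 < t - y := sub_pos.mpr ht'
    have hv : 0 < t ^ β - y ^ β := by
      rcases eq_or_lt_of_le hy with h0 | h0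
      · rw [← h0, Real.zero_rpow hβ0.ne', sub_zero]; positivity
      · exact sub_pos.mpr (Real.rpow_lt_rpow hy ht' hβ0)
    have h1 : HasDerivAt (fun t : ℝ => t - y) 1 t := (hasDerivAt_id t).sub_const y
    have h2 : HasDerivAt (fun t : ℝ => (t - y) ^ ((p - 1) / p))
        (1 * ((p - 1) / p) * (t - y) ^ ((p - 1) / p - 1)) t :=
      h1.rpow_const (Or.inl hu.ne')
    have h3 : HasDerivAt (fun t : ℝ => t ^ β - y ^ β) (β * t ^ (β - 1)) t :=
      (Real.hasDerivAt_rpow_const (Or.inl ht0.ne')).sub_const _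
    have h4 : HasDerivAt (fun t : ℝ => (t ^ β - y ^ β) ^ (1 / p))
        ((β * t ^ (β - 1)) * (1 / p) * (t ^ β - y ^ β) ^ (1 / p - 1)) t :=
      h3.rpow_const (Or.inl hv.ne')
    have h5 := (h2.mul h4).const_mul γ
    have h6 : HasDerivAt (fun t : ℝ => t ^ γ - y ^ γ) (γ * t ^ (γ - 1)) t :=
      (Real.hasDerivAt_rpow_const (Or.inl ht0.ne')).sub_const _
    exact h5.sub h6
  -- the derivative is nonnegative
  have hderiv_nonneg : ∀ t ∈ Ioi y, 0 ≤
      γ * ((1 * ((p - 1) / p) * (t - y) ^ ((p - 1) / p - 1)) * (t ^ β - y ^ β) ^ (1 / p)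
        + (t - y) ^ ((p - 1) / p) *
          ((β * t ^ (β - 1)) * (1 / p) * (t ^ β - y ^ β) ^ (1 / p - 1)))
        - γ * t ^ (γ - 1) := by
    intro t ht
    have ht' : y < t := ht
    have ht0 : 0 < t := lt_of_le_of_lt hy ht'
    have hu : 0 < t - y := sub_pos.mpr ht'
    have hv : 0 < t ^ β - y ^ β := by
      rcases eq_or_lt_of_le hy with h0 | h0
      · rw [← h0, Real.zero_rpow hβ0.ne', sub_zero]; positivity
      · exact sub_pos.mpr (Real.rpow_lt_rpow hy ht' hβ0)
    set A : ℝ := (t - y) ^ ((p - 1) / p - 1) * (t ^ β - y ^ β) ^ (1 / p) with hAdef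
    set B : ℝ := β * t ^ (β - 1) * ((t - y) ^ ((p - 1) / p) * (t ^ β - y ^ β) ^ (1 / p - 1))
      with hBdef
    have hA : 0 < A := by positivity
    have hB : 0 < B := by positivity
    have hw : (p - 1) / p + 1 / p = 1 := by field_simp; ring
    have hAM : A ^ ((p - 1) / p) * B ^ (1 / p) ≤ (p - 1) / p * A + 1 / p * B :=
      Real.geom_mean_le_arith_mean2_weighted (by positivity) (by positivity) hA.le hB.le hw
    have hlogA : Real.log A = ((p - 1) / p - 1) * Real.log (t - y)
        + 1 / p * Real.log (t ^ β - y ^ β) := by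
      rw [hAdef, Real.log_mul (Real.rpow_pos_of_pos hu _).ne' (Real.rpow_pos_of_pos hv _).ne',
        Real.log_rpow hu, Real.log_rpow hv]
    have hlogB : Real.log B = Real.log β + (β - 1) * Real.log t
        + (p - 1) / p * Real.log (t - y) + (1 / p - 1) * Real.log (t ^ β - y ^ β) := by
      rw [hBdef, Real.log_mul (by positivity)
          (mul_pos (Real.rpow_pos_of_pos hu _) (Real.rpow_pos_of_pos hv _)).ne',
        Real.log_mul hβ0.ne' (Real.rpow_pos_of_pos ht0 _).ne',
        Real.log_mul (Real.rpow_pos_of_pos hu _).ne' (Real.rpow_pos_of_pos hv _).ne',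
        Real.log_rpow ht0, Real.log_rpow hu, Real.log_rpow hv]
      ring
    have hval : A ^ ((p - 1) / p) * B ^ (1 / p) = β ^ (1 / p) * t ^ ((β - 1) / p) := by
      rw [Real.rpow_def_of_pos hA, Real.rpow_def_of_pos hB,
        Real.rpow_def_of_pos hβ0, Real.rpow_def_of_pos ht0, ← Real.exp_add, ← Real.exp_add]
      congr 1
      rw [hlogA, hlogB]
      field_simp
      ring
    have hβp : (1:ℝ) ≤ β ^ (1 / p) := Real.one_le_rpow hβ (by positivity)
    have hγt : t ^ (γ - 1) = t ^ ((β - 1) / p) := by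
      congr 1
      rw [hγdef]; field_simp; ring
    have hlow : t ^ (γ - 1) ≤ (p - 1) / p * A + 1 / p * B := by
      rw [hγt]
      calc t ^ ((β - 1) / p) = 1 * t ^ ((β - 1) / p) := (one_mul _).symm
        _ ≤ β ^ (1 / p) * t ^ ((β - 1) / p) := by
            apply mul_le_mul_of_nonneg_right hβp (by positivity)
        _ = A ^ ((p - 1) / p) * B ^ (1 / p) := hval.symm
        _ ≤ (p - 1) / p * A + 1 / p * B := hAM
    have hrw : (1 * ((p - 1) / p) * (t - y) ^ ((p - 1) / p - 1)) * (t ^ β - y ^ β) ^ (1 / p)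
        + (t - y) ^ ((p - 1) / p) *
          ((β * t ^ (β - 1)) * (1 / p) * (t ^ β - y ^ β) ^ (1 / p - 1))
        = (p - 1) / p * A + 1 / p * B := by rw [hAdef, hBdef]; ring
    rw [hrw]
    have := mul_le_mul_of_nonneg_left hlow hγ0.le
    linarith
  -- monotonicity
  have hmono : MonotoneOn f (Ici y) := by
    apply monotoneOn_of_deriv_nonneg (convex_Ici y) hc.continuousOn
    · intro t ht
      rw [interior_Ici] at ht
      exact ((hderiv t ht).differentiableAt).differentiableWithinAt
    · intro t ht
      rw [interior_Ici] at ht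
      rw [(hderiv t ht).deriv]
      exact hderiv_nonneg t ht
  have h0 : f y = 0 := by
    have hne : (p - 1) / p ≠ 0 := (div_pos hp1 hp0).ne'
    simp only [hfdef, sub_self, Real.zero_rpow hne, zero_mul, mul_zero, sub_zero]
  have := hmono (mem_Ici.mpr le_rfl) (mem_Ici.mpr hxy) hxy
  rw [h0] at this
  simp only [hfdef] at this
  linarith

/-- Half of the main theorem: the case `b ≤ a`. -/
lemma aux_half (a b p β : ℝ) (hp : 1 < p) (hβ : 1 ≤ β) (hab : b ≤ a) :
    (p / (β + p - 1)) ^ p *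
      |(max a 0) ^ ((β + p - 1) / p) - (max b 0) ^ ((β + p - 1) / p)| ^ p ≤
    |a - b| ^ (p - 2) * (a - b) * ((max a 0) ^ β - (max b 0) ^ β) := by
  have hp0 : (0:ℝ) < p := lt_trans one_pos hp
  have hp1 : (0:ℝ) < p - 1 := by linarith
  have hβ0 : (0:ℝ) < β := lt_of_lt_of_le one_pos hβ
  rcases eq_or_lt_of_le hab with heq | hlt
  · subst heq
    simp [Real.zero_rpow hp0.ne']
  set x : ℝ := max a 0 with hxdef
  set y : ℝ := max b 0 with hydef
  have hy : 0 ≤ y := le_max_right b 0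
  have hxy : y ≤ x := max_le_max hab le_rfl
  set γ : ℝ := (β + p - 1) / p with hγdef
  have hγp : 0 < β + p - 1 := by linarith
  have hγ0 : 0 < γ := by positivity
  · have hd : 0 < a - b := sub_pos.mpr hlt
    have hsub : x - y ≤ a - b := by
      rw [hxdef, hydef]
      rcases le_or_gt a 0 with ha | ha
      · rw [max_eq_right ha, max_eq_right (le_trans hab ha)]; linarith
      · rw [max_eq_left ha.le]
        rcases le_or_gt b 0 with hb | hb
        · rw [max_eq_right hb]; linarith
        · rw [max_eq_left hb.le]
    -- rewrite RHS factor
    have habs : |a - b| ^ (p - 2) * (a - b) = (a - b) ^ (p - 1) := by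
      rw [abs_of_pos hd, show p - 1 = p - 2 + 1 by ring, Real.rpow_add_one hd.ne']
    have hvy : 0 ≤ x ^ β - y ^ β := sub_nonneg.mpr (Real.rpow_le_rpow hy hxy hβ0.le)
    have hgy : 0 ≤ x ^ γ - y ^ γ := sub_nonneg.mpr (Real.rpow_le_rpow hy hxy hγ0.le)
    have hcore := aux_core p β hp hβ hy hxy
    rw [← hγdef] at hcore
    -- raise core to the p-th power
    have hxy0 : 0 ≤ x - y := sub_nonneg.mpr hxy
    have hpow : (x ^ γ - y ^ γ) ^ p ≤ γ ^ p * ((x - y) ^ (p - 1) * (x ^ β - y ^ β)) := by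
      have h1 : (x ^ γ - y ^ γ) ^ p
          ≤ (γ * ((x - y) ^ ((p - 1) / p) * (x ^ β - y ^ β) ^ (1 / p))) ^ p :=
        Real.rpow_le_rpow hgy hcore hp0.le
      calc (x ^ γ - y ^ γ) ^ p
          ≤ (γ * ((x - y) ^ ((p - 1) / p) * (x ^ β - y ^ β) ^ (1 / p))) ^ p := h1
        _ = γ ^ p * ((x - y) ^ (p - 1) * (x ^ β - y ^ β)) := by
            rw [Real.mul_rpow hγ0.le (by positivity),
              Real.mul_rpow (by positivity) (by positivity),
              ← Real.rpow_mul hxy0, ← Real.rpow_mul hvy,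
              div_mul_cancel₀ _ hp0.ne', one_div, inv_mul_cancel₀ hp0.ne', Real.rpow_one]
    have hCγ : (p / (β + p - 1)) ^ p * γ ^ p = 1 := by
      rw [← Real.mul_rpow (by positivity) hγ0.le, hγdef,
        show p / (β + p - 1) * ((β + p - 1) / p) = 1 by field_simp, Real.one_rpow]
    have hC0 : (0:ℝ) ≤ (p / (β + p - 1)) ^ p := by positivity
    calc (p / (β + p - 1)) ^ p * |x ^ γ - y ^ γ| ^ p
        = (p / (β + p - 1)) ^ p * (x ^ γ - y ^ γ) ^ p := by rw [abs_of_nonneg hgy]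
      _ ≤ (p / (β + p - 1)) ^ p * (γ ^ p * ((x - y) ^ (p - 1) * (x ^ β - y ^ β))) :=
          mul_le_mul_of_nonneg_left hpow hC0
      _ = (x - y) ^ (p - 1) * (x ^ β - y ^ β) := by
          rw [← mul_assoc, hCγ, one_mul]
      _ ≤ (a - b) ^ (p - 1) * (x ^ β - y ^ β) :=
          mul_le_mul_of_nonneg_right (Real.rpow_le_rpow hxy0 hsub (by linarith)) hvy
      _ = |a - b| ^ (p - 2) * (a - b) * (x ^ β - y ^ β) := by rw [habs]

/-- Inequality (i1): for all reals `a b`, `p > 1`, `β ≥ 1`, with `C(β,p) = (p/(β+p-1))^p`,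
`|a-b|^{p-2}(a-b)((a⁺)^β - (b⁺)^β) ≥ C(β,p)|(a⁺)^{(β+p-1)/p} - (b⁺)^{(β+p-1)/p}|^p`. -/
theorem stmt0 (a b p β : ℝ) (hp : 1 < p) (hβ : 1 ≤ β) :
    (p / (β + p - 1)) ^ p *
      |(max a 0) ^ ((β + p - 1) / p) - (max b 0) ^ ((β + p - 1) / p)| ^ p ≤
    |a - b| ^ (p - 2) * (a - b) * ((max a 0) ^ β - (max b 0) ^ β) := by
  rcases le_total b a with h | h
  · exact aux_half a b p β hp hβ h
  · have := aux_half b a p β hp hβ h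
    rw [abs_sub_comm b a, abs_sub_comm ((max b 0) ^ ((β + p - 1) / p)) _] at this
    calc (p / (β + p - 1)) ^ p *
        |(max a 0) ^ ((β + p - 1) / p) - (max b 0) ^ ((β + p - 1) / p)| ^ p
        ≤ |a - b| ^ (p - 2) * (b - a) * ((max b 0) ^ β - (max a 0) ^ β) := this
      _ = |a - b| ^ (p - 2) * (a - b) * ((max a 0) ^ β - (max b 0) ^ β) := by ring
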